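/- arXiv:1808.06712 — 7 statements merged into one kernel-verified Lean document; each statement's English description precedes it below -/
import Mathlib

section
/- For any family {X_s}_{s∈S} of topological spaces and subsets A_s ⊆ X_s, the θ-closure of the product ∏_{s∈S} A_s in the product space X = ∏_{s∈S} X_s equals the product of the θ-closures: cl_θ(∏_{s∈S} A_s) = ∏_{s∈S} cl_θ(A_s). -/
open Set Topology Cardinal

universe u v

def thetaCl (X : Type u) [TopologicalSpace X] (A : Set X) : Set X :=
  {x | ∀ U : Set X, IsOpen U → x ∈ U → (closure U ∩ A).Nonempty}

def thetaClN (X : Type u) [TopologicalSpace X] (n : ℕ) (A : Set X) : Set X :=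
  (thetaCl X)^[n] A

def gammaCl (X : Type u) [TopologicalSpace X] (n : ℕ) (A : Set X) : Set X :=
  {x | ∀ U : Set X, IsOpen U → x ∈ U → (thetaClN X n U ∩ A).Nonempty}

def ThetaUrysohn (X : Type u) [TopologicalSpace X] (n : ℕ) : Prop :=
  ∀ x y : X, x ≠ y → ∃ U V : Set X, IsOpen U ∧ IsOpen V ∧ x ∈ U ∧ y ∈ V ∧
    thetaClN X n U ∩ thetaClN X n V = ∅

theorem thetaCl_pi {S : Type u} (X : S → Type v) [∀ s, TopologicalSpace (X s)]
    (A : ∀ s, Set (X s)) :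
    thetaCl (∀ s, X s) (Set.univ.pi A) = Set.univ.pi (fun s => thetaCl (X s) (A s)) := by
  classical
  ext x
  constructor
  · intro hx s _
    intro U hU hxU
    obtain ⟨y, hyc, hyA⟩ := hx ((fun f => f s) ⁻¹' U)
      (hU.preimage (continuous_apply s)) hxU
    have h1 : closure ((fun f : ∀ s, X s => f s) ⁻¹' U) ⊆
        (fun f : ∀ s, X s => f s) ⁻¹' closure U :=
      closure_minimal (preimage_mono subset_closure)
        (isClosed_closure.preimage (continuous_apply s))
    exact ⟨y s, h1 hyc, hyA s (mem_univ s)⟩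
  · intro hx U hU hxU
    obtain ⟨I, u, hu, hsub⟩ := isOpen_pi_iff.mp hU x hxU
    -- for each s ∈ I, pick y s in closure (u s) ∩ A s
    have hpick : ∀ s : S, ∃ y : X s, y ∈ A s ∧ (s ∈ I → y ∈ closure (u s)) := by
      intro s
      by_cases hs : s ∈ I
      · obtain ⟨y, hy1, hy2⟩ := hx s (mem_univ s) (u s) (hu s hs).1 (hu s hs).2
        exact ⟨y, hy2, fun _ => hy1⟩
      · obtain ⟨y, _, hy2⟩ := hx s (mem_univ s) univ isOpen_univ (mem_univ _)
        exact ⟨y, hy2, fun h => absurd h hs⟩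
    choose y hyA hyc using hpick
    refine ⟨y, ?_, fun s _ => hyA s⟩
    have : y ∈ closure ((I : Set S).pi u) := by
      rw [closure_pi_set]
      exact fun s hs => hyc s hs
    exact closure_mono hsub this
end

section
/- For every n ∈ ω with n ≥ 1 and any subset A of a topological space X, the n-θ-closure is contained in the Dikranjan–Giuli θⁿ-closure: cl_θⁿ(A) ⊆ cl_{θ^n}(A), where cl_θⁿ denotes the n-fold iterate of the θ-closure operator and cl_{θ^n} denotes the Dikranjan–Giuli θⁿ-closure. -/
open Set Topology Cardinal

universe u v

/-- Dikranjan–Giuli closure: `dgCl X m` is the θ^(m+1)-closure, defined via chains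
`U 0 ⊆ U 1 ⊆ ... ⊆ U m` of open neighborhoods with `closure (U i) ⊆ U (i+1)`. -/
def dgCl (X : Type u) [TopologicalSpace X] (m : ℕ) (M : Set X) : Set X :=
  {x | ∀ U : Fin (m + 1) → Set X, (∀ i, IsOpen (U i)) → (∀ i, x ∈ U i) →
    (∀ i : Fin m, closure (U i.castSucc) ⊆ U i.succ) →
    (closure (U (Fin.last m)) ∩ M).Nonempty}

lemma thetaClN_chain_aux (X : Type u) [TopologicalSpace X] :
    ∀ (n : ℕ) (A : Set X) (x : X), x ∈ thetaClN X (n + 1) A →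
      ∀ U : Fin (n + 1) → Set X, (∀ i, IsOpen (U i)) → (∀ i, x ∈ U i) →
        (∀ i : Fin n, closure (U i.castSucc) ⊆ U i.succ) →
        (closure (U (Fin.last n)) ∩ A).Nonempty := by
  intro n
  induction n with
  | zero =>
    intro A x hx U ho hm _
    have hx' : x ∈ thetaCl X A := by simpa [thetaClN] using hx
    exact hx' (U 0) (ho 0) (hm 0)
  | succ n ih =>
    intro A x hx U ho hm hc
    have hx' : x ∈ thetaCl X (thetaClN X (n + 1) A) := by
      simpa [thetaClN, Function.iterate_succ_apply'] using hx
    obtain ⟨y, hyU, hyA⟩ := hx' (U 0) (ho 0) (hm 0)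
    have hmono : ∀ i : Fin (n + 1), y ∈ U i.succ := by
      intro i
      induction i using Fin.induction with
      | zero => exact hc 0 (by simpa using hyU)
      | succ j ihj =>
        have := hc j.succ (subset_closure (by
          rw [← Fin.succ_castSucc]; exact ihj))
        exact this
    have hlast : (closure ((fun i : Fin (n + 1) => U i.succ) (Fin.last n)) ∩ A).Nonempty := by
      apply ih A y hyA (fun i => U i.succ) (fun i => ho i.succ) hmono
      intro i
      have := hc i.succ
      rwa [← Fin.succ_castSucc] at this
    simpa [Fin.succ_last] using hlast

theorem thetaClN_subset_dgCl (X : Type u) [TopologicalSpace X] (n : ℕ) (hn : 1 ≤ n)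
    (A : Set X) : thetaClN X n A ⊆ dgCl X (n - 1) A := by
  obtain ⟨m, rfl⟩ : ∃ m, n = m + 1 := ⟨n - 1, by omega⟩
  intro x hx U ho hm hc
  exact thetaClN_chain_aux X m A x hx U ho hm hc
end

section
/- For any topological space X and any open subset U of X, the Dikranjan–Giuli θ²-closure of U equals the θ-closure of the closure of U, which equals the 2-fold iterated θ-closure of U: cl_{θ²}(U) = cl_θ(cl(U)) = cl_θ(cl_θ(U)). -/
open Set Topology Cardinal

universe u v

theorem dgCl_two_eq_thetaCl_closure (X : Type u) [TopologicalSpace X] {U : Set X}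
    (hU : IsOpen U) :
    dgCl X 1 U = thetaCl X (closure U) ∧ thetaCl X (closure U) = thetaClN X 2 U := by
  constructor
  · ext x
    constructor
    · intro hx V hV hxV
      by_contra hcon
      rw [Set.not_nonempty_iff_eq_empty] at hcon
      have hVc : closure V ⊆ (closure U)ᶜ := by
        intro y hy hyU
        exact Set.eq_empty_iff_forall_notMem.mp hcon y ⟨hy, hyU⟩
      have hxc : x ∈ (closure U)ᶜ := hVc (subset_closure hxV)
      have := hx (fun i => if i = 0 then V else (closure U)ᶜ)
        (fun i => by by_cases h : i = 0 <;> simp [h, hV, isClosed_closure.isOpen_compl])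
        (fun i => by by_cases h : i = 0 <;> simp [h, hxV, hxc])
        (fun i => by
          have : i = 0 := Subsingleton.elim i 0
          subst this
          simpa using hVc)
      simp only [Fin.last] at this
      obtain ⟨z, hz1, hz2⟩ := this
      have hz1' : z ∈ closure ((closure U)ᶜ) := by simpa using hz1
      obtain ⟨w, hw1, hw2⟩ := mem_closure_iff.mp hz1' U hU hz2
      exact hw2 (subset_closure hw1)
    · intro hx W hWo hxW hchain
      have h0 := hx (W 0) (hWo 0) (hxW 0)
      obtain ⟨y, hy1, hy2⟩ := h0
      have hylast : y ∈ W (Fin.last 1) := hchain 0 (by simpa using hy1)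
      obtain ⟨z, hz1, hz2⟩ := mem_closure_iff.mp hy2 (W (Fin.last 1)) (hWo _) hylast
      exact ⟨z, subset_closure hz1, hz2⟩
  · have key : thetaCl X U = closure U := by
      ext x
      constructor
      · intro hx
        rw [mem_closure_iff]
        intro V hV hxV
        obtain ⟨y, hy1, hy2⟩ := hx V hV hxV
        obtain ⟨z, hz1, hz2⟩ := mem_closure_iff.mp hy1 U hU hy2
        exact ⟨z, hz2, hz1⟩
      · intro hx V hV hxV
        obtain ⟨z, hz1, hz2⟩ := mem_closure_iff.mp hx V hV hxV
        exact ⟨z, subset_closure hz1, hz2⟩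
    show thetaCl X (closure U) = (thetaCl X)^[2] U
    rw [Function.iterate_succ_apply', Function.iterate_one, key]
end

section
/- A topological space X is θ¹-Urysohn if and only if X is a Urysohn space. -/
open Set Topology Cardinal

universe u v

lemma thetaCl_eq_closure_of_isOpen (X : Type u) [TopologicalSpace X] {U : Set X}
    (hU : IsOpen U) : thetaCl X U = closure U := by
  ext x
  constructor
  · intro hx
    rw [mem_closure_iff]
    intro V hV hxV
    obtain ⟨z, hzV, hzU⟩ := hx V hV hxV
    have : (U ∩ V).Nonempty := by
      have := mem_closure_iff.mp hzV U hU hzU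
      exact this
    exact ⟨this.choose, this.choose_spec.2, this.choose_spec.1⟩
  · intro hx V hV hxV
    obtain ⟨z, hzV, hzU⟩ := mem_closure_iff.mp hx V hV hxV
    exact ⟨z, subset_closure hzV, hzU⟩

theorem thetaUrysohn_one_iff_urysohn (X : Type u) [TopologicalSpace X] :
    ThetaUrysohn X 1 ↔
      ∀ x y : X, x ≠ y → ∃ U V : Set X, IsOpen U ∧ IsOpen V ∧ x ∈ U ∧ y ∈ V ∧
        closure U ∩ closure V = ∅ := by
  have h1 : ∀ {U : Set X}, IsOpen U → thetaClN X 1 U = closure U := by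
    intro U hU
    simp only [thetaClN, Function.iterate_one]
    exact thetaCl_eq_closure_of_isOpen X hU
  constructor
  · intro h x y hxy
    obtain ⟨U, V, hUo, hVo, hxU, hyV, hdisj⟩ := h x y hxy
    exact ⟨U, V, hUo, hVo, hxU, hyV, by rwa [h1 hUo, h1 hVo] at hdisj⟩
  · intro h x y hxy
    obtain ⟨U, V, hUo, hVo, hxU, hyV, hdisj⟩ := h x y hxy
    exact ⟨U, V, hUo, hVo, hxU, hyV, by rwa [h1 hUo, h1 hVo]⟩
end

section
/- A topological space X is θⁿ-Urysohn if and only if for every x ∈ X, the intersection over all open neighborhoods U of x of the sets cl_γⁿ(cl_θⁿ(U)) equals {x}. -/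
open Set Topology Cardinal

universe u v

lemma subset_thetaClN (X : Type u) [TopologicalSpace X] (n : ℕ) (A : Set X) :
    A ⊆ thetaClN X n A := by
  induction n with
  | zero => simp [thetaClN]
  | succ k ih =>
    intro a ha
    have : thetaClN X (k+1) A = thetaCl X (thetaClN X k A) := by
      simp [thetaClN, Function.iterate_succ_apply']
    rw [this]
    intro U hU haU
    exact ⟨a, subset_closure haU, ih ha⟩

theorem thetaUrysohn_iff_iInter (X : Type u) [TopologicalSpace X] (n : ℕ) :
    ThetaUrysohn X n ↔
      ∀ x : X, (⋂ U ∈ {U : Set X | IsOpen U ∧ x ∈ U},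
        gammaCl X n (thetaClN X n U)) = {x} := by
  constructor
  · intro h x
    apply Set.eq_singleton_iff_unique_mem.mpr
    constructor
    · simp only [Set.mem_iInter]
      intro U ⟨hU, hxU⟩ V hV hxV
      exact ⟨x, subset_thetaClN X n V hxV, subset_thetaClN X n U hxU⟩
    · intro y hy
      by_contra hne
      obtain ⟨U, V, hU, hV, hxU, hyV, hUV⟩ := h x y (Ne.symm hne)
      have hyU : y ∈ gammaCl X n (thetaClN X n U) := by
        have := Set.mem_iInter.mp hy U
        exact Set.mem_iInter.mp this ⟨hU, hxU⟩
      obtain ⟨z, hz1, hz2⟩ := hyU V hV hyV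
      exact absurd hUV (Set.Nonempty.ne_empty ⟨z, hz2, hz1⟩)
  · intro h x y hxy
    have hy : y ∉ (⋂ U ∈ {U : Set X | IsOpen U ∧ x ∈ U},
        gammaCl X n (thetaClN X n U)) := by
      rw [h x]; exact fun hm => hxy (Set.mem_singleton_iff.mp hm).symm
    simp only [Set.mem_iInter, not_forall] at hy
    obtain ⟨U, ⟨hU, hxU⟩, hyU⟩ := hy
    simp only [gammaCl, Set.mem_setOf_eq, not_forall] at hyU
    obtain ⟨V, hV, hyV, hne⟩ := hyU
    refine ⟨U, V, hU, hV, hxU, hyV, ?_⟩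
    rw [Set.not_nonempty_iff_eq_empty] at hne
    rw [Set.inter_comm]; exact hne
end

section
/- Let X be a topological space with t_γⁿ(X) ≤ κ for an infinite cardinal κ. If H ⊆ X satisfies H = ⋃{cl_γⁿ(A) : A ⊆ H, |A| ≤ κ}, then H is n-γ-closed, i.e., cl_γⁿ(H) = H. -/
open Set Topology Cardinal

universe u v

theorem gammaClosed_of_union (X : Type u) [TopologicalSpace X] (n : ℕ) (κ : Cardinal.{u})
    (hκ : ℵ₀ ≤ κ)
    (ht : ∀ (x : X) (A : Set X), x ∈ gammaCl X n A →
      ∃ B ⊆ A, #B ≤ κ ∧ x ∈ gammaCl X n B)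
    (H : Set X)
    (hH : H = ⋃₀ {C | ∃ A : Set X, A ⊆ H ∧ #A ≤ κ ∧ C = gammaCl X n A}) :
    gammaCl X n H = H := by
  apply Set.Subset.antisymm
  · intro x hx
    obtain ⟨B, hBH, hBκ, hxB⟩ := ht x H hx
    rw [hH]
    exact ⟨gammaCl X n B, ⟨B, hBH, hBκ, rfl⟩, hxB⟩
  · intro x hx
    rw [hH] at hx
    obtain ⟨C, ⟨A, hAH, _, rfl⟩, hxA⟩ := hx
    intro U hU hxU
    obtain ⟨y, hy1, hy2⟩ := hxA U hU hxU
    exact ⟨y, hy1, hAH hy2⟩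
end

section
/- For every topological space X and every n ≥ 1, the n-γ-tightness of X is at most the character of X: t_γⁿ(X) ≤ χ(X). -/
open Set Topology Cardinal

universe u v

noncomputable def tGamma (X : Type u) [TopologicalSpace X] (n : ℕ) : Cardinal.{u} :=
  sInf {κ | ∀ (x : X) (A : Set X), x ∈ gammaCl X n A →
    ∃ B ⊆ A, #B ≤ κ ∧ x ∈ gammaCl X n B}

noncomputable def charX (X : Type u) [TopologicalSpace X] : Cardinal.{u} :=
  ⨆ x : X, sInf {κ | ∃ B : Set (Set X), #B ≤ κ ∧ (∀ U ∈ B, IsOpen U ∧ x ∈ U) ∧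
    ∀ V : Set X, IsOpen V → x ∈ V → ∃ U ∈ B, U ⊆ V}

lemma thetaCl_mono (X : Type u) [TopologicalSpace X] : Monotone (thetaCl X) := by
  intro A B h x hx U hU hxU
  obtain ⟨y, hy, hyA⟩ := hx U hU hxU
  exact ⟨y, hy, h hyA⟩

lemma thetaClN_mono (X : Type u) [TopologicalSpace X] (n : ℕ) :
    Monotone (thetaClN X n) := (thetaCl_mono X).iterate n

theorem tGamma_le_char (X : Type u) [TopologicalSpace X] (n : ℕ) (hn : 1 ≤ n) :
    tGamma X n ≤ charX X := by
  apply csInf_le (OrderBot.bddBelow _)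
  intro x A hxA
  set S := {κ | ∃ B : Set (Set X), #B ≤ κ ∧ (∀ U ∈ B, IsOpen U ∧ x ∈ U) ∧
    ∀ V : Set X, IsOpen V → x ∈ V → ∃ U ∈ B, U ⊆ V} with hSdef
  have hS : S.Nonempty :=
    ⟨#{U : Set X | IsOpen U ∧ x ∈ U}, {U | IsOpen U ∧ x ∈ U}, le_rfl,
      fun U hU => hU, fun V hV hxV => ⟨V, ⟨hV, hxV⟩, subset_rfl⟩⟩
  obtain ⟨Bse, hBcard, hBopen, hBbase⟩ := csInf_mem hS
  have hpick : ∀ U : Bse, (thetaClN X n (U : Set X) ∩ A).Nonempty :=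
    fun U => hxA U (hBopen U U.2).1 (hBopen U U.2).2
  choose f hf using hpick
  refine ⟨range f, ?_, ?_, ?_⟩
  · rintro y ⟨U, rfl⟩
    exact (hf U).2
  · calc #(range f) ≤ #Bse := Cardinal.mk_range_le
      _ ≤ sInf S := hBcard
      _ ≤ charX X := le_ciSup (Cardinal.bddAbove_range _) x
  · intro V hV hxV
    obtain ⟨U, hU, hUV⟩ := hBbase V hV hxV
    exact ⟨f ⟨U, hU⟩, thetaClN_mono X n hUV (hf ⟨U, hU⟩).1, mem_range_self _⟩
end
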